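/- arXiv:2408.02401 — 3 statements merged into one kernel-verified Lean document; each statement's English description precedes it below -/
import Mathlib

section
/- Let $X$ be a random variable on a probability space with distribution determined by a measure $F$, let $F^*$ be another probability measure with $F \ll F^*$, let $h$ be measurable, $Y = h(X)$, and let $G$ denote the distribution function of $Y$ under $F$. Fix $u \in (0,1)$ and suppose $G$ is continuous at the quantile $q_Y(u)$ (so that $G(q_Y(u)) = u$). Then $\mathsf{E}_{F^*}\big[ (dF/dF^*)(X)^2 \, \mathbf{1}_{\{h(X) > q_Y(u)\}} \big] \ge (1-u)^2$. -/
open MeasureTheory Filter Topology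

theorem stmt_1 {E : Type*} [MeasurableSpace E]
    (F Fstar : Measure E) [IsProbabilityMeasure F] [IsProbabilityMeasure Fstar]
    (hac : F ≪ Fstar) (h : E → ℝ) (hmeas : Measurable h)
    (G : ℝ → ℝ) (hG : ∀ y, G y = (F {x | h x ≤ y}).toReal)
    (u : ℝ) (hu : u ∈ Set.Ioo (0:ℝ) 1)
    (q : ℝ) (hq : q = sInf {y : ℝ | u ≤ G y})
    (hcont : ContinuousAt G q) :
    ENNReal.ofReal ((1 - u) ^ 2) ≤
      ∫⁻ x in {x | q < h x}, (F.rnDeriv Fstar x) ^ 2 ∂Fstar := by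
  obtain ⟨hu0, hu1⟩ := hu
  -- G is monotone
  have hGmono : Monotone G := by
    intro a b hab
    rw [hG a, hG b]
    exact ENNReal.toReal_mono (measure_ne_top _ _)
      (measure_mono fun x hx => le_trans hx hab)
  -- the set defining the quantile is nonempty
  have hne : Set.Nonempty {y : ℝ | u ≤ G y} := by
    have htop : Tendsto (fun n : ℕ => F {x | h x ≤ (n:ℝ)}) atTop (𝓝 (F (⋃ n : ℕ, {x | h x ≤ (n:ℝ)}))) :=
      tendsto_measure_iUnion_atTop (fun a b hab x hx => show h x ≤ (b:ℝ) from le_trans hx (Nat.cast_le.mpr hab))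
    have hunion : (⋃ n : ℕ, {x : E | h x ≤ (n:ℝ)}) = Set.univ := by
      ext x
      simp only [Set.mem_iUnion, Set.mem_setOf_eq, Set.mem_univ, iff_true]
      obtain ⟨n, hn⟩ := exists_nat_ge (h x)
      exact ⟨n, hn⟩
    rw [hunion, measure_univ] at htop
    have htR : Tendsto (fun n : ℕ => G (n:ℝ)) atTop (𝓝 1) := by
      have := (ENNReal.tendsto_toReal (by simp)).comp htop
      simpa [Function.comp_def, hG] using this
    obtain ⟨n, hn⟩ := (htR.eventually (eventually_gt_nhds hu1)).exists
    exact ⟨(n:ℝ), le_of_lt hn⟩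
  -- the set is bounded below
  have hbot : ∃ y : ℝ, G y < u := by
    have hmeasn : ∀ n : ℕ, NullMeasurableSet {x : E | h x ≤ -(n:ℝ)} F :=
      fun n => (hmeas measurableSet_Iic).nullMeasurableSet
    have hinter : (⋂ n : ℕ, {x : E | h x ≤ -(n:ℝ)}) = ∅ := by
      ext x
      simp only [Set.mem_iInter, Set.mem_setOf_eq, Set.mem_empty_iff_false, iff_false, not_forall,
        not_le]
      obtain ⟨n, hn⟩ := exists_nat_ge (-(h x))
      exact ⟨n + 1, by push_cast; linarith⟩
    have hbotT : Tendsto (fun n : ℕ => F {x | h x ≤ -(n:ℝ)}) atTop (𝓝 (F (⋂ n : ℕ, {x | h x ≤ -(n:ℝ)}))) := by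
      refine tendsto_measure_iInter_atTop hmeasn ?_ ⟨0, measure_ne_top _ _⟩
      intro a b hab x hx
      exact show h x ≤ -(a:ℝ) from le_trans hx (neg_le_neg (Nat.cast_le.mpr hab))
    rw [hinter, measure_empty] at hbotT
    have htR : Tendsto (fun n : ℕ => G (-(n:ℝ))) atTop (𝓝 0) := by
      have := (ENNReal.tendsto_toReal (by simp)).comp hbotT
      simpa [Function.comp_def, hG] using this
    obtain ⟨n, hn⟩ := (htR.eventually (eventually_lt_nhds hu0)).exists
    exact ⟨-(n:ℝ), hn⟩
  obtain ⟨y₀, hy₀⟩ := hbot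
  have hbdd : BddBelow {y : ℝ | u ≤ G y} := by
    refine ⟨y₀, fun z hz => ?_⟩
    by_contra hzy
    push_neg at hzy
    exact absurd (le_trans hz (hGmono hzy.le)) (not_le.mpr hy₀)
  -- G q = u
  have hGq : G q = u := by
    have hge : u ≤ G q := by
      have hev : ∀ᶠ y in 𝓝[>] q, u ≤ G y := by
        filter_upwards [self_mem_nhdsWithin] with y hy
        obtain ⟨z, hz, hzy⟩ := (csInf_lt_iff hbdd hne).mp (hq ▸ hy)
        exact le_trans hz (hGmono hzy.le)
      exact ge_of_tendsto (hcont.tendsto.mono_left nhdsWithin_le_nhds) hev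
    have hle : G q ≤ u := by
      have hev : ∀ᶠ y in 𝓝[<] q, G y ≤ u := by
        filter_upwards [self_mem_nhdsWithin] with y hy
        by_contra hyu
        push_neg at hyu
        exact absurd (hq ▸ csInf_le hbdd (le_of_lt hyu)) (not_le.mpr hy)
      exact le_of_tendsto (hcont.tendsto.mono_left nhdsWithin_le_nhds) hev
    linarith
  -- measure computations
  have hFle : F {x | h x ≤ q} = ENNReal.ofReal u := by
    have h1 : (F {x | h x ≤ q}).toReal = u := by rw [← hG q, hGq]
    rw [← h1, ENNReal.ofReal_toReal (measure_ne_top _ _)]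
  have hmS : MeasurableSet {x : E | q < h x} := measurableSet_lt measurable_const hmeas
  have hFgt : F {x | q < h x} = ENNReal.ofReal (1 - u) := by
    have hcompl : {x : E | q < h x} = {x : E | h x ≤ q}ᶜ := by
      ext x; simp [not_le]
    rw [hcompl, measure_compl (show MeasurableSet {x : E | h x ≤ q} from hmeas measurableSet_Iic) (measure_ne_top _ _), measure_univ, hFle,
      ENNReal.ofReal_sub 1 hu0.le, ENNReal.ofReal_one]
  -- Cauchy-Schwarz
  set f := F.rnDeriv Fstar with hf
  have hint : ∫⁻ x in {x | q < h x}, f x ∂Fstar = ENNReal.ofReal (1 - u) := by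
    rw [Measure.setLIntegral_rnDeriv hac, hFgt]
  have hfm : AEMeasurable f (Fstar.restrict {x | q < h x}) :=
    (Measure.measurable_rnDeriv F Fstar).aemeasurable
  have hCS := ENNReal.lintegral_mul_le_Lp_mul_Lq (Fstar.restrict {x | q < h x})
    (⟨by norm_num, by norm_num, by norm_num⟩ : Real.HolderConjugate 2 2) hfm
    (aemeasurable_const (b := (1 : ENNReal)))
  simp only [Pi.mul_apply, mul_one, ENNReal.one_rpow, lintegral_const, one_mul,
    Measure.restrict_apply_univ] at hCS
  have hB : (Fstar {x | q < h x}) ^ (1 / (2:ℝ)) ≤ 1 :=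
    ENNReal.rpow_le_one prob_le_one (by norm_num)
  have hA : ENNReal.ofReal (1 - u) ≤ (∫⁻ x in {x | q < h x}, f x ^ (2:ℝ) ∂Fstar) ^ (1 / (2:ℝ)) := by
    calc ENNReal.ofReal (1 - u) = ∫⁻ x in {x | q < h x}, f x ∂Fstar := hint.symm
    _ ≤ (∫⁻ x in {x | q < h x}, f x ^ (2:ℝ) ∂Fstar) ^ (1 / (2:ℝ)) * (Fstar {x | q < h x}) ^ (1 / (2:ℝ)) := hCS
    _ ≤ (∫⁻ x in {x | q < h x}, f x ^ (2:ℝ) ∂Fstar) ^ (1 / (2:ℝ)) * 1 := by gcongr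
    _ = _ := mul_one _
  have hsq := ENNReal.rpow_le_rpow hA (by norm_num : (0:ℝ) ≤ 2)
  rw [← ENNReal.rpow_mul, show (1 / (2:ℝ)) * 2 = 1 by norm_num, ENNReal.rpow_one] at hsq
  have hL : ENNReal.ofReal (1 - u) ^ (2:ℝ) = ENNReal.ofReal ((1 - u) ^ 2) := by
    rw [show ((2:ℝ)) = ((2:ℕ):ℝ) by norm_num, ENNReal.rpow_natCast,
      ENNReal.ofReal_pow (by linarith)]
  have hR : ∀ x : ENNReal, x ^ (2:ℝ) = x ^ 2 := fun x => by
    rw [show ((2:ℝ)) = ((2:ℕ):ℝ) by norm_num, ENNReal.rpow_natCast]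
  rw [hL] at hsq
  simp_rw [hR] at hsq
  exact hsq
end

section
/- Let $g$ be a left-continuous distortion function and $X$ a bounded random variable with distribution function $F_X$ and lower quantile function $q_X(u) = \inf\{x : F_X(x) \ge u\}$. Then the distortion risk measure satisfies $\rho_g(X) = \int_{[0,1]} q_X(1-u)\, dg(u) = \int_{[0,1]} q_X(u)\, d\bar g(u)$, where $\bar g(u) = 1 - g(1-u)$ and the integrals are Lebesgue–Stieltjes integrals with respect to the measure induced by $g$ (resp. $\bar g$). -/
open MeasureTheory

noncomputable def distortionRM {Ω : Type*} [MeasurableSpace Ω]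
    (P : Measure Ω) (g : ℝ → ℝ) (X : Ω → ℝ) : ℝ :=
  (∫ x in Set.Iic (0:ℝ), (g ((P {ω | x < X ω}).toReal) - 1)) +
  ∫ x in Set.Ioi (0:ℝ), g ((P {ω | x < X ω}).toReal)

open Set Filter Topology

theorem stmt_7 {Ω : Type*} [MeasurableSpace Ω] (P : Measure Ω) [IsProbabilityMeasure P]
    (g : ℝ → ℝ) (hg_mono : MonotoneOn g (Set.Icc 0 1)) (hg0 : g 0 = 0) (hg1 : g 1 = 1)
    (hg_lc : ∀ u ∈ Set.Icc (0:ℝ) 1, ContinuousWithinAt g (Set.Iic u) u)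
    (X : Ω → ℝ) (hX : Measurable X) (hXb : ∃ C, ∀ ω, |X ω| ≤ C)
    (q : ℝ → ℝ) (hq : ∀ u, q u = sInf {x : ℝ | u ≤ (P {ω | X ω ≤ x}).toReal})
    (σ : StieltjesFunction ℝ)
    (hσ : ∀ u : ℝ, σ u = if u < 0 then 0 else if u ≤ 1 then 1 - g (1 - u) else 1) :
    distortionRM P g X =
      ∫ u in Set.Icc (0:ℝ) 1, q (1 - u) ∂(Measure.map (fun u => 1 - u) σ.measure) ∧
    distortionRM P g X = ∫ u in Set.Icc (0:ℝ) 1, q u ∂σ.measure := by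
  classical
  obtain ⟨C₀, hC₀⟩ := hXb
  set C : ℝ := max C₀ 0 with hCdef
  have hC0 : (0:ℝ) ≤ C := le_max_right _ _
  have hXC : ∀ ω, |X ω| ≤ C := fun ω => (hC₀ ω).trans (le_max_left _ _)
  set F : ℝ → ℝ := fun x => (P {ω | X ω ≤ x}).toReal with hFdef
  have hmeas_le : ∀ x : ℝ, MeasurableSet {ω | X ω ≤ x} := fun x => hX measurableSet_Iic
  have hF0 : ∀ x, 0 ≤ F x := fun x => ENNReal.toReal_nonneg
  have hF1 : ∀ x, F x ≤ 1 := by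
    intro x
    have := ENNReal.toReal_mono (by simp) (prob_le_one (μ := P) (s := {ω | X ω ≤ x}))
    simpa using this
  have hF_mono : Monotone F := fun a b hab =>
    ENNReal.toReal_mono (measure_ne_top P _) (measure_mono (fun ω h => le_trans h hab))
  have hF_one : ∀ x, C ≤ x → F x = 1 := by
    intro x hx
    have : {ω | X ω ≤ x} = univ := by
      ext ω; simp only [mem_setOf_eq, mem_univ, iff_true]
      exact le_trans (le_trans (le_abs_self _) (hXC ω)) hx
    simp [hFdef, this]
  have hF_zero : ∀ x, x < -C → F x = 0 := by
    intro x hx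
    have : {ω | X ω ≤ x} = ∅ := by
      ext ω; simp only [mem_setOf_eq, mem_empty_iff_false, iff_false, not_le]
      have := hXC ω
      have := neg_abs_le (X ω)
      linarith
    simp [hFdef, this]
  have hS : ∀ x, (P {ω | x < X ω}).toReal = 1 - F x := by
    intro x
    have hc : {ω | x < X ω} = {ω | X ω ≤ x}ᶜ := by ext ω; simp [not_le]
    rw [hc, measure_compl (hmeas_le x) (measure_ne_top P _), measure_univ,
      ENNReal.toReal_sub_of_le prob_le_one ENNReal.one_ne_top]
    simp [hFdef]
  have hg_mem : ∀ y, 0 ≤ y → y ≤ 1 → 0 ≤ g y ∧ g y ≤ 1 := by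
    intro y h0 h1
    constructor
    · rw [← hg0]; exact hg_mono ⟨le_refl 0, zero_le_one⟩ ⟨h0, h1⟩ h0
    · rw [← hg1]; exact hg_mono ⟨h0, h1⟩ ⟨zero_le_one, le_refl 1⟩ h1
  -- quantile characterization
  have hqF : ∀ u, q u = sInf {x | u ≤ F x} := fun u => hq u
  have hbdd : ∀ u : ℝ, 0 < u → BddBelow {x | u ≤ F x} := by
    intro u hu
    refine ⟨-C, fun y hy => ?_⟩
    by_contra h
    push_neg at h
    simp only [mem_setOf_eq] at hy
    rw [hF_zero y h] at hy
    exact absurd hy (not_le.mpr hu)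
  have hne : ∀ u : ℝ, u ≤ 1 → C ∈ {x | u ≤ F x} := by
    intro u hu; simp only [mem_setOf_eq, hF_one C le_rfl]; exact hu
  have hq_le_iff : ∀ u, 0 < u → u ≤ 1 → ∀ x, (q u ≤ x ↔ u ≤ F x) := by
    intro u hu0 hu1 x
    rw [hqF]
    constructor
    · intro h
      set a := sInf {x | u ≤ F x} with ha
      have key : u ≤ F a := by
        have h1 : ∀ n : ℕ, u ≤ F (a + 1/(n+1)) := by
          intro n
          have hlt : a < a + 1/(n+1) := by
            have : (0:ℝ) < 1/(n+1) := by positivity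
            linarith
          obtain ⟨y, hy, hylt⟩ := (csInf_lt_iff (hbdd u hu0) ⟨C, hne u hu1⟩).mp (ha ▸ hlt)
          exact le_trans hy (hF_mono hylt.le)
        have hseteq : {ω | X ω ≤ a} = ⋂ n : ℕ, {ω | X ω ≤ a + 1/(n+1)} := by
          ext ω
          simp only [mem_iInter, mem_setOf_eq]
          constructor
          · intro h n
            have : (0:ℝ) < 1/(n+1) := by positivity
            linarith
          · intro h
            by_contra hcon
            push_neg at hcon
            obtain ⟨n, hn⟩ := exists_nat_one_div_lt (show (0:ℝ) < X ω - a by linarith)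
            have := h n
            linarith
        have h2 : Tendsto (fun n : ℕ => P {ω | X ω ≤ a + 1/(n+1)}) atTop
            (𝓝 (P {ω | X ω ≤ a})) := by
          rw [hseteq]
          exact tendsto_measure_iInter_atTop (fun n => (hmeas_le _).nullMeasurableSet)
            (fun m n hmn => by
              apply Set.setOf_subset_setOf.mpr
              intro ω hω
              have h1n : 1/((n:ℝ)+1) ≤ 1/((m:ℝ)+1) := by
                apply one_div_le_one_div_of_le (by positivity)
                have := (Nat.cast_le (α := ℝ)).mpr hmn; linarith
              linarith)
            ⟨0, measure_ne_top P _⟩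
        have h3 : Tendsto (fun n : ℕ => F (a + 1/(n+1))) atTop (𝓝 (F a)) :=
          (ENNReal.tendsto_toReal (measure_ne_top P _)).comp h2
        exact ge_of_tendsto h3 (Eventually.of_forall h1)
      exact le_trans key (hF_mono h)
    · intro h
      exact csInf_le (hbdd u hu0) h
  have hq_nonpos : ∀ u : ℝ, u ≤ 0 → q u = 0 := by
    intro u hu
    rw [hqF]
    have : {x | u ≤ F x} = univ := by
      ext x; simp only [mem_setOf_eq, mem_univ, iff_true]
      exact le_trans hu (hF0 x)
    rw [this, csInf_of_not_bddBelow, Real.sInf_empty]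
    rintro ⟨b, hb⟩
    have := hb (mem_univ (b-1))
    linarith
  have hq_gt_one : ∀ u : ℝ, 1 < u → q u = 0 := by
    intro u hu
    rw [hqF]
    have : {x | u ≤ F x} = ∅ := by
      ext x; simp only [mem_setOf_eq, mem_empty_iff_false, iff_false, not_le]
      exact lt_of_le_of_lt (hF1 x) hu
    rw [this, Real.sInf_empty]
  have hq_mem : ∀ u : ℝ, 0 < u → u ≤ 1 → -C ≤ q u ∧ q u ≤ C := by
    intro u hu0 hu1
    constructor
    · rw [hqF]
      apply le_csInf ⟨C, hne u hu1⟩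
      intro y hy
      by_contra h
      push_neg at h
      simp only [mem_setOf_eq] at hy
      rw [hF_zero y h] at hy
      exact absurd hy (not_le.mpr hu0)
    · exact (hq_le_iff u hu0 hu1 C).mpr (by rw [hF_one C le_rfl]; exact hu1)
  -- measurability of q
  have hq_meas : Measurable q := by
    apply measurable_of_Iic
    intro x
    have key : ∀ u : ℝ, q u ≤ x ↔ ((u ∈ Ioc (0:ℝ) 1 ∧ u ≤ F x) ∨ (u ∉ Ioc (0:ℝ) 1 ∧ 0 ≤ x)) := by
      intro u
      by_cases hu : u ∈ Ioc (0:ℝ) 1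
      · simp only [hu, true_and, not_true, false_and, or_false]
        exact hq_le_iff u hu.1 hu.2 x
      · simp only [hu, false_and, false_or, not_false_iff, true_and]
        have : q u = 0 := by
          rw [mem_Ioc, not_and_or] at hu
          rcases hu with h | h
          · exact hq_nonpos u (not_lt.mp h)
          · exact hq_gt_one u (not_le.mp h)
        rw [this]
      
    have : q ⁻¹' Iic x = (Ioc 0 1 ∩ Iic (F x)) ∪ ((Ioc (0:ℝ) 1)ᶜ ∩ {u : ℝ | (0:ℝ) ≤ x}) := by
      ext u
      simp only [mem_preimage, mem_Iic, key u, mem_union, mem_inter_iff, mem_compl_iff,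
        mem_setOf_eq]
    rw [this]
    by_cases h0x : 0 ≤ x
    · have : {u : ℝ | (0:ℝ) ≤ x} = univ := by ext u; simp [h0x]
      rw [this]
      exact ((measurableSet_Ioc.inter measurableSet_Iic).union
        (measurableSet_Ioc.compl.inter MeasurableSet.univ))
    · have : {u : ℝ | (0:ℝ) ≤ x} = ∅ := by ext u; simp [h0x]
      rw [this]
      simpa using (measurableSet_Ioc.inter measurableSet_Iic)
  -- σ facts
  have hσ0 : σ 0 = 0 := by rw [hσ]; norm_num [hg1]
  have hσ1 : σ 1 = 1 := by rw [hσ]; norm_num [hg0]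
  have hσ_neg : ∀ u : ℝ, u < 0 → σ u = 0 := by intro u hu; rw [hσ]; simp [hu]
  have hleftLim0 : Function.leftLim σ 0 = 0 := by
    apply leftLim_eq_of_tendsto (α := ℝ) (f := ⇑σ)
    apply Tendsto.congr' ?_ tendsto_const_nhds
    filter_upwards [self_mem_nhdsWithin] with u hu
    exact (hσ_neg u hu).symm
  have hsing0 : σ.measure {0} = 0 := by
    rw [σ.measure_singleton, hσ0, hleftLim0]; simp
  have hIcc : σ.measure (Icc 0 1) = 1 := by
    rw [σ.measure_Icc, hσ1, hleftLim0]; simp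
  have hσval : ∀ y : ℝ, 0 ≤ y → y ≤ 1 → σ y = 1 - g (1 - y) := by
    intro y h0 h1; rw [hσ]; simp [not_lt.mpr h0, h1]
  set ν : Measure ℝ := σ.measure.restrict (Icc 0 1) with hνdef
  have hνfin : IsFiniteMeasure ν := by
    constructor
    rw [hνdef, Measure.restrict_apply_univ, hIcc]
    exact ENNReal.one_lt_top
  have hνuniv : ν univ = 1 := by rw [hνdef, Measure.restrict_apply_univ, hIcc]
  -- key measure computation
  have hνkey : ∀ x : ℝ, ν {u | x < q u} = ENNReal.ofReal (g (1 - F x)) := by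
    intro x
    rw [hνdef, Measure.restrict_apply (by
      have : {u : ℝ | x < q u} = q ⁻¹' (Ioi x) := rfl
      rw [this]; exact hq_meas measurableSet_Ioi)]
    have sub1 : Ioc (F x) 1 ⊆ {u | x < q u} ∩ Icc 0 1 := by
      rintro u ⟨h1, h2⟩
      have hu0 : 0 < u := lt_of_le_of_lt (hF0 x) h1
      refine ⟨?_, ⟨hu0.le, h2⟩⟩
      simp only [mem_setOf_eq]
      by_contra h
      push_neg at h
      exact absurd ((hq_le_iff u hu0 h2 x).mp h) (not_le.mpr h1)
    have sub2 : {u | x < q u} ∩ Icc 0 1 ⊆ Ioc (F x) 1 ∪ {0} := by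
      rintro u ⟨h1, h2, h3⟩
      rcases eq_or_lt_of_le h2 with h | h
      · exact Or.inr (by simp [← h])
      · left
        refine ⟨?_, h3⟩
        by_contra hcon
        push_neg at hcon
        have := (hq_le_iff u h h3 x).mpr hcon
        simp only [mem_setOf_eq] at h1
        linarith
    have hmeq : σ.measure ({u | x < q u} ∩ Icc 0 1) = σ.measure (Ioc (F x) 1) := by
      apply le_antisymm
      · calc σ.measure ({u | x < q u} ∩ Icc 0 1) ≤ σ.measure (Ioc (F x) 1 ∪ {0}) :=
              measure_mono sub2
          _ ≤ σ.measure (Ioc (F x) 1) + σ.measure {0} := measure_union_le _ _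
          _ = σ.measure (Ioc (F x) 1) := by rw [hsing0, add_zero]
      · exact measure_mono sub1
    rw [hmeq, σ.measure_Ioc, hσ1, hσval (F x) (hF0 x) (hF1 x)]
    ring_nf
  -- G
  set G : ℝ → ℝ := fun x => g (1 - F x) with hGdef
  have hG_mem : ∀ x, 0 ≤ G x ∧ G x ≤ 1 := fun x =>
    hg_mem (1 - F x) (by linarith [hF1 x]) (by linarith [hF0 x])
  have hG_anti : Antitone G := by
    intro a b hab
    exact hg_mono ⟨by linarith [hF1 b], by linarith [hF0 b]⟩
      ⟨by linarith [hF1 a], by linarith [hF0 a]⟩ (by linarith [hF_mono hab])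
  have hG_meas : Measurable G := hG_anti.measurable
  have hG_zero : ∀ x, C ≤ x → G x = 0 := by
    intro x hx; rw [hGdef]; simp only; rw [hF_one x hx]; simpa using hg0
  have hG_one : ∀ x, x < -C → G x = 1 := by
    intro x hx; rw [hGdef]; simp only; rw [hF_zero x hx]; simpa using hg1

  -- integrability of q w.r.t. ν
  haveI : IsFiniteMeasure ν := hνfin
  have hq_bound_ae : ∀ᵐ u ∂ν, |q u| ≤ C := by
    rw [hνdef]
    refine (ae_restrict_iff' measurableSet_Icc).2 (Eventually.of_forall ?_)
    rintro u ⟨h0, h1⟩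
    rcases eq_or_lt_of_le h0 with h | h
    · rw [hq_nonpos u (le_of_eq h.symm)]; simpa using hC0
    · exact abs_le.mpr ⟨(hq_mem u h h1).1, (hq_mem u h h1).2⟩
  have hq_int : Integrable q ν :=
    Integrable.mono' (integrable_const C) hq_meas.aestronglyMeasurable hq_bound_ae
  have hf_int : Integrable (fun u => q u + C) ν := hq_int.add (integrable_const C)
  have hf_nn : 0 ≤ᵐ[ν] fun u => q u + C := by
    filter_upwards [hq_bound_ae] with u hu
    have h := abs_le.mp hu
    simp only [Pi.zero_apply]
    linarith [h.1]
  have hLCr : ∫ u, (q u + C) ∂ν = ∫ t in Ioi (0:ℝ), G (t - C) := by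
    rw [hf_int.integral_eq_integral_meas_lt hf_nn]
    apply setIntegral_congr_fun measurableSet_Ioi
    intro t _
    have hset : {u : ℝ | t < q u + C} = {u | t - C < q u} := by
      ext u; simp only [mem_setOf_eq]; constructor <;> intro <;> linarith
    simp only
    rw [hset, measureReal_def, hνkey]
    exact ENNReal.toReal_ofReal (hG_mem (t - C)).1
  have hint_qC : ∫ u, (q u + C) ∂ν = (∫ u, q u ∂ν) + C := by
    rw [integral_add hq_int (integrable_const C), integral_const, measureReal_def, hνuniv]
    simp
  have htrans : ∫ t in Ioi (0:ℝ), G (t - C) = ∫ x in Ioi (-C), G x := by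
    have hemb : MeasurableEmbedding (fun x : ℝ => x + -C) :=
      (MeasurableEquiv.addRight (-C)).measurableEmbedding
    have h1 := hemb.setIntegral_map (μ := volume) G (Ioi (-C))
    rw [map_add_right_eq_self volume (-C)] at h1
    have hpre : (fun x : ℝ => x + -C) ⁻¹' (Ioi (-C)) = Ioi 0 := by
      ext t; simp only [mem_preimage, mem_Ioi]; constructor <;> intro <;> linarith
    rw [hpre] at h1
    simp only [sub_eq_add_neg]
    exact h1.symm
  have hG_int_on : ∀ s : Set ℝ, volume s < ⊤ → IntegrableOn G s := by
    intro s hs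
    refine Integrable.mono' ((integrableOn_const_iff (C := (1:ℝ))).mpr (Or.inr hs))
      hG_meas.aestronglyMeasurable.restrict (Eventually.of_forall ?_)
    intro x
    exact abs_le.mpr ⟨by linarith [(hG_mem x).1], (hG_mem x).2⟩
  have hG_int_Ioc : IntegrableOn G (Ioc (-C) 0) :=
    hG_int_on _ (by rw [Real.volume_Ioc]; exact ENNReal.ofReal_lt_top)
  have hG_int_Ioi : IntegrableOn G (Ioi 0) := by
    rw [← Ioc_union_Ioi_eq_Ioi hC0]
    refine IntegrableOn.union (hG_int_on _ (by rw [Real.volume_Ioc]; exact ENNReal.ofReal_lt_top)) ?_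
    exact IntegrableOn.congr_fun integrableOn_zero
      (fun x hx => (hG_zero x (le_of_lt hx)).symm) measurableSet_Ioi
  have hsplit1 : ∫ x in Ioi (-C), G x = (∫ x in Ioc (-C) 0, G x) + ∫ x in Ioi (0:ℝ), G x := by
    rw [← Ioc_union_Ioi_eq_Ioi (neg_nonpos.mpr hC0)]
    exact setIntegral_union Ioc_disjoint_Ioi_same measurableSet_Ioi hG_int_Ioc hG_int_Ioi
  have hGx : ∀ x : ℝ, g ((P {ω | x < X ω}).toReal) = G x := fun x => by rw [hS]
  have hconst_Ioc : IntegrableOn (fun _ : ℝ => (1:ℝ)) (Ioc (-C) 0) :=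
    (integrableOn_const_iff (C := (1:ℝ))).mpr (Or.inr (by rw [Real.volume_Ioc]; exact ENNReal.ofReal_lt_top))
  have hIoc_const : ∫ _ in Ioc (-C) (0:ℝ), (1:ℝ) = C := by
    rw [setIntegral_const, measureReal_def, Real.volume_Ioc, ENNReal.toReal_ofReal (by linarith)]
    simp
  have hIoc_sub : ∫ x in Ioc (-C) (0:ℝ), (G x - 1) = (∫ x in Ioc (-C) 0, G x) - C := by
    rw [integral_sub hG_int_Ioc hconst_Ioc, hIoc_const]
  have hIic : ∫ x in Iic (0:ℝ), (G x - 1) = ∫ x in Ioc (-C) 0, (G x - 1) := by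
    rw [← Iic_union_Ioc_eq_Iic (neg_nonpos.mpr hC0)]
    have hzero : (fun x => G x - 1) =ᵐ[volume.restrict (Iic (-C))] (fun _ => (0:ℝ)) := by
      refine (ae_restrict_iff' measurableSet_Iic).2 ?_
      filter_upwards [measure_eq_zero_iff_ae_notMem.mp (Real.volume_singleton (a := -C))] with x hx hxI
      have hlt : x < -C := lt_of_le_of_ne hxI (by simpa using hx)
      simp only [hG_one x hlt, sub_self]
    have hint0 : IntegrableOn (fun x => G x - 1) (Iic (-C)) :=
      (integrable_zero _ _ _).congr hzero.symm
    have h0 : ∫ x in Iic (-C), (G x - 1) = 0 := by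
      rw [integral_congr_ae hzero, integral_zero]
    rw [setIntegral_union (Iic_disjoint_Ioc le_rfl) measurableSet_Ioc hint0
      (hG_int_Ioc.sub hconst_Ioc), h0, zero_add]
  have e0 : (∫ u, q u ∂ν) + C = ∫ x in Ioi (-C), G x := by
    rw [← hint_qC, hLCr, htrans]
  have hmain : distortionRM P g X = ∫ u, q u ∂ν := by
    unfold distortionRM
    simp only [hGx]
    rw [hIic, hIoc_sub]
    linarith [e0, hsplit1]
  refine ⟨?_, hmain⟩
  have hT : MeasurableEmbedding (fun u : ℝ => 1 - u) :=
    (MeasurableEquiv.subLeft (1:ℝ)).measurableEmbedding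
  rw [hT.setIntegral_map]
  have hpre : (fun u : ℝ => 1 - u) ⁻¹' (Icc 0 1) = Icc 0 1 := by
    ext u
    simp only [mem_preimage, mem_Icc]
    constructor <;> rintro ⟨h1, h2⟩ <;> constructor <;> linarith
  rw [hpre]
  simp only [sub_sub_cancel]
  exact hmain
end

section
/- Let $X$ be a bounded random variable, $n \in \mathbb{N}$, and let $X_1,\dots,X_n$ be independent copies of $X$. Then the distortion risk measure with distortion function $g(u) = 1-(1-u)^n$ satisfies $\rho_g(X) = \mathsf{E}[\max\{X_1,\dots,X_n\}]$. -/
open MeasureTheory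

/-- Signed layer-cake formula for a.e.-bounded random variables on a probability space. -/
lemma layercake_signed {Ω : Type*} [MeasurableSpace Ω] (P : Measure Ω) [IsProbabilityMeasure P]
    (Y : Ω → ℝ) (hY : Measurable Y) (C : ℝ) (hC : 0 < C) (hb : ∀ᵐ ω ∂P, |Y ω| ≤ C) :
    ∫ ω, Y ω ∂P =
      (∫ x in Set.Iic (0:ℝ), ((P {ω | x < Y ω}).toReal - 1)) +
      ∫ x in Set.Ioi (0:ℝ), (P {ω | x < Y ω}).toReal := by
  set F : ℝ → ℝ := fun x => (P {ω | x < Y ω}).toReal with hFdef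
  have h0 : P {ω | ¬ |Y ω| ≤ C} = 0 := ae_iff.mp hb
  have hFanti : Antitone F := by
    intro a b hab
    exact ENNReal.toReal_mono (measure_ne_top P _)
      (measure_mono (fun ω hω => lt_of_le_of_lt hab hω))
  have hFmeas : Measurable F := hFanti.measurable
  have hFnn : ∀ x, 0 ≤ F x := fun x => ENNReal.toReal_nonneg
  have hFle : ∀ x, F x ≤ 1 := by
    intro x
    calc F x ≤ (1 : ENNReal).toReal := ENNReal.toReal_mono ENNReal.one_ne_top prob_le_one
    _ = 1 := ENNReal.toReal_one
  have int_on : ∀ s : Set ℝ, volume s < ⊤ → IntegrableOn F s := by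
    intro s hsfin
    refine Integrable.mono'
      (show IntegrableOn (fun _ : ℝ => (1:ℝ)) s volume from (integrableOn_const_iff (by simp)).mpr (Or.inr hsfin))
      hFmeas.aestronglyMeasurable.restrict ?_
    filter_upwards with x
    rw [Real.norm_eq_abs, abs_of_nonneg (hFnn x)]
    exact hFle x
  have hF0 : ∀ x, C ≤ x → F x = 0 := by
    intro x hx
    have : P {ω | x < Y ω} = 0 := by
      refine measure_mono_null (fun ω hω => ?_) h0
      simp only [Set.mem_setOf_eq] at hω ⊢
      intro habs
      have := (abs_le.mp habs).2
      linarith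
    simp [hFdef, this]
  have hF1 : ∀ x, x < -C → F x = 1 := by
    intro x hx
    have hcompl : P {ω | x < Y ω}ᶜ = 0 := by
      refine measure_mono_null (fun ω hω => ?_) h0
      simp only [Set.mem_compl_iff, Set.mem_setOf_eq, not_lt] at hω
      simp only [Set.mem_setOf_eq]
      intro habs
      have := (abs_le.mp habs).1
      linarith
    have : P {ω | x < Y ω} = 1 := by
      rw [measure_congr (ae_eq_univ.mpr hcompl), measure_univ]
    simp [hFdef, this]
  -- integrability pieces
  have hYint : Integrable Y P := by
    refine Integrable.mono' (integrable_const C) hY.aestronglyMeasurable ?_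
    filter_upwards [hb] with ω hω using by rwa [Real.norm_eq_abs]
  have hZint : Integrable (fun ω => Y ω + C) P := hYint.add (integrable_const C)
  have hZnn : 0 ≤ᵐ[P] fun ω => Y ω + C := by
    filter_upwards [hb] with ω hω
    have := (abs_le.mp hω).1
    simp only [Pi.zero_apply]
    linarith
  have hlayer := hZint.integral_eq_integral_meas_lt hZnn
  have hset : ∀ t : ℝ, {ω | t < Y ω + C} = {ω | t - C < Y ω} := by
    intro t; ext ω
    simp only [Set.mem_setOf_eq]
    constructor <;> intro <;> linarith
  have hlayer2 : ∫ ω, (Y ω + C) ∂P = ∫ t in Set.Ioi (0:ℝ), F (t - C) := by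
    rw [hlayer]
    exact setIntegral_congr_fun measurableSet_Ioi (fun t _ => by rw [hset t]; rfl)
  have htrans : ∫ t in Set.Ioi (0:ℝ), F (t - C) = ∫ s in Set.Ioi (-C), F s := by
    rw [← integral_indicator measurableSet_Ioi, ← integral_indicator measurableSet_Ioi,
      ← integral_add_right_eq_self ((Set.Ioi (-C)).indicator F) (-C)]
    congr 1
    funext x
    by_cases hx : 0 < x
    · rw [Set.indicator_of_mem (by simpa using hx),
        Set.indicator_of_mem (show x + -C ∈ Set.Ioi (-C) by simp only [Set.mem_Ioi]; linarith)]
      simp [sub_eq_add_neg]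
    · rw [Set.indicator_of_notMem (by simpa using hx),
        Set.indicator_of_notMem (show x + -C ∉ Set.Ioi (-C) by
          simp only [Set.mem_Ioi]; intro h; exact hx (by linarith))]
  have intIoc : IntegrableOn F (Set.Ioc (-C) 0) := int_on _ measure_Ioc_lt_top
  have intIoi : IntegrableOn F (Set.Ioi (0:ℝ)) := by
    rw [← Set.Ioc_union_Ioi_eq_Ioi hC.le]
    exact (int_on _ measure_Ioc_lt_top).union
      ((integrableOn_congr_fun (fun x hx => hF0 x (le_of_lt hx)) measurableSet_Ioi).mpr
        (integrableOn_zero))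
  have hIoi : ∫ s in Set.Ioi (-C), F s
      = (∫ s in Set.Ioc (-C) 0, F s) + ∫ s in Set.Ioi (0:ℝ), F s := by
    rw [← Set.Ioc_union_Ioi_eq_Ioi (by linarith : -C ≤ (0:ℝ))]
    exact setIntegral_union (Set.Ioc_disjoint_Ioi le_rfl) measurableSet_Ioi intIoc intIoi
  have intIccF : IntegrableOn F (Set.Icc (-C) 0) := int_on _ measure_Icc_lt_top
  have intIcc1 : IntegrableOn (fun _ : ℝ => (1:ℝ)) (Set.Icc (-C) 0) :=
    (integrableOn_const_iff (by simp)).mpr (Or.inr measure_Icc_lt_top)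
  have hIic : ∫ x in Set.Iic (0:ℝ), (F x - 1) = ∫ x in Set.Icc (-C) 0, (F x - 1) := by
    have hzero : ∫ x in Set.Iio (-C), (F x - 1) = 0 := by
      rw [setIntegral_congr_fun measurableSet_Iio
        (fun x hx => by simp [hF1 x hx] : Set.EqOn (fun x => F x - 1) 0 (Set.Iio (-C)))]
      simp
    have intIio : IntegrableOn (fun x => F x - 1) (Set.Iio (-C)) :=
      (integrableOn_congr_fun (fun x hx => by simp [hF1 x hx])
        measurableSet_Iio).mpr integrableOn_zero
    rw [← Set.Iio_union_Icc_eq_Iic (by linarith : -C ≤ (0:ℝ)),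
      setIntegral_union (((Set.Iio_disjoint_Ici le_rfl).mono_right Set.Icc_subset_Ici_self)) measurableSet_Icc intIio
        (intIccF.sub intIcc1), hzero, zero_add]
  have hIcc : ∫ x in Set.Icc (-C) 0, (F x - 1) = (∫ x in Set.Icc (-C) 0, F x) - C := by
    rw [integral_sub intIccF intIcc1, setIntegral_const, smul_eq_mul, mul_one, Real.volume_real_Icc_of_le (by linarith)]
    ring_nf
  have hIccIoc : ∫ x in Set.Icc (-C) 0, F x = ∫ x in Set.Ioc (-C) 0, F x :=
    integral_Icc_eq_integral_Ioc
  have hshift : ∫ ω, (Y ω + C) ∂P = ∫ ω, Y ω ∂P + C := by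
    rw [integral_add hYint (integrable_const C), integral_const]
    simp
  have : ∫ ω, Y ω ∂P + C
      = ((∫ x in Set.Icc (-C) 0, F x) - C + ∫ s in Set.Ioi (0:ℝ), F s) + C := by
    rw [← hshift, hlayer2, htrans, hIoi, ← hIccIoc]; ring
  have hmain : ∫ ω, Y ω ∂P
      = (∫ x in Set.Icc (-C) 0, F x) - C + ∫ s in Set.Ioi (0:ℝ), F s := by linarith
  rw [hmain, hIic, hIcc]

theorem stmt_11 {Ω : Type*} [MeasurableSpace Ω] (P : Measure Ω) [IsProbabilityMeasure P]
    (n : ℕ) (hn : 0 < n)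
    (X : Ω → ℝ) (hX : Measurable X) (hXb : ∃ C, ∀ ω, |X ω| ≤ C)
    (Xs : Fin n → Ω → ℝ) (hXs : ∀ i, Measurable (Xs i))
    (hindep : ProbabilityTheory.iIndepFun Xs P)
    (hident : ∀ i, Measure.map (Xs i) P = Measure.map X P)
    (g : ℝ → ℝ) (hg : ∀ u, g u = 1 - (1 - u) ^ n) :
    distortionRM P g X =
      ∫ ω, (Finset.univ.sup' (Finset.univ_nonempty_iff.mpr ⟨⟨0, hn⟩⟩) fun i => Xs i ω) ∂P := by
  obtain ⟨C₀, hC₀⟩ := hXb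
  set C : ℝ := |C₀| + 1 with hCdef
  have hC : 0 < C := by positivity
  have hXC : ∀ ω, |X ω| ≤ C := fun ω => le_trans (hC₀ ω) (by
    calc C₀ ≤ |C₀| := le_abs_self _
    _ ≤ C := by simp [hCdef])
  have hne : (Finset.univ : Finset (Fin n)).Nonempty := Finset.univ_nonempty_iff.mpr ⟨⟨0, hn⟩⟩
  set M : Ω → ℝ := fun ω => Finset.univ.sup' hne fun i => Xs i ω with hMdef
  have hMmeas : Measurable M := by
    have : M = Finset.univ.sup' hne Xs := by
      funext ω; rw [Finset.sup'_apply]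
    rw [this]
    exact Finset.measurable_sup' hne (fun i _ => hXs i)
  -- a.e. bound for each Xs i, hence for M
  have hmeasset : MeasurableSet {y : ℝ | ¬ |y| ≤ C} :=
    (measurableSet_le measurable_abs measurable_const).compl
  have hbi : ∀ i, ∀ᵐ ω ∂P, |Xs i ω| ≤ C := by
    intro i
    rw [ae_iff]
    have h1 : {ω | ¬ |Xs i ω| ≤ C} = (Xs i) ⁻¹' {y | ¬ |y| ≤ C} := rfl
    have h2 : X ⁻¹' {y | ¬ |y| ≤ C} = ∅ := by
      ext ω; simp [hXC ω]
    rw [h1, ← Measure.map_apply (hXs i) hmeasset, hident i,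
      Measure.map_apply hX hmeasset, h2, measure_empty]
  have hbM : ∀ᵐ ω ∂P, |M ω| ≤ C := by
    filter_upwards [ae_all_iff.mpr hbi] with ω hω
    rw [abs_le]
    constructor
    · calc -C ≤ Xs ⟨0, hn⟩ ω := (abs_le.mp (hω ⟨0, hn⟩)).1
      _ ≤ M ω := Finset.le_sup' (fun i => Xs i ω) (Finset.mem_univ ⟨0, hn⟩)
    · exact Finset.sup'_le _ _ (fun i _ => (abs_le.mp (hω i)).2)
  -- distributional identity: P(M > x) = g (P(X > x))
  have hkey : ∀ x : ℝ, g ((P {ω | x < X ω}).toReal) = (P {ω | x < M ω}).toReal := by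
    intro x
    have hcap : {ω | M ω ≤ x} = ⋂ i, {ω | Xs i ω ≤ x} := by
      ext ω
      simp [hMdef, Finset.sup'_le_iff]
    have hprod : P {ω | M ω ≤ x} = ∏ i : Fin n, P {ω | Xs i ω ≤ x} := by
      rw [hcap]
      exact hindep.meas_iInter (fun i => ⟨Set.Iic x, measurableSet_Iic, rfl⟩)
    have hi : ∀ i, P {ω | Xs i ω ≤ x} = P {ω | X ω ≤ x} := by
      intro i
      have := congrArg (fun μ : Measure ℝ => μ (Set.Iic x)) (hident i)
      simpa [Measure.map_apply (hXs i) measurableSet_Iic,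
        Measure.map_apply hX measurableSet_Iic, Set.preimage, Set.mem_Iic] using this
    have hpow : P {ω | M ω ≤ x} = (P {ω | X ω ≤ x}) ^ n := by
      rw [hprod]
      simp [hi]
    have hcomplM : {ω | x < M ω} = {ω | M ω ≤ x}ᶜ := by
      ext ω; simp
    have hcomplX : {ω | x < X ω} = {ω | X ω ≤ x}ᶜ := by
      ext ω; simp
    have hMle : MeasurableSet {ω | M ω ≤ x} := measurableSet_le hMmeas measurable_const
    have hXle : MeasurableSet {ω | X ω ≤ x} := measurableSet_le hX measurable_const
    have hPM : (P {ω | x < M ω}).toReal = 1 - ((P {ω | X ω ≤ x}).toReal) ^ n := by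
      rw [hcomplM, prob_compl_eq_one_sub hMle, hpow,
        ENNReal.toReal_sub_of_le (pow_le_one' prob_le_one n) ENNReal.one_ne_top,
        ENNReal.toReal_one, ENNReal.toReal_pow]
    have hPX : (P {ω | X ω ≤ x}).toReal = 1 - (P {ω | x < X ω}).toReal := by
      have : {ω | X ω ≤ x} = {ω | x < X ω}ᶜ := by ext ω; simp
      rw [this, prob_compl_eq_one_sub (measurableSet_lt measurable_const hX),
        ENNReal.toReal_sub_of_le prob_le_one ENNReal.one_ne_top, ENNReal.toReal_one]
    rw [hg, hPM, hPX]
  have hlc := layercake_signed P M hMmeas C hC hbM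
  rw [distortionRM]
  rw [setIntegral_congr_fun measurableSet_Iic (fun x _ => by rw [hkey x]),
    setIntegral_congr_fun measurableSet_Ioi (fun x _ => by rw [hkey x]), ← hlc]
end
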